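/- arXiv:1708.09763 — 2 statements merged into one kernel-verified Lean document; each statement's English description precedes it below -/
import Mathlib

section
/- Let F : ℝ → ℝ be twice differentiable with |F''(x)| ≤ L for all x. For real numbers φ^{n+1}, φ^n, φ^{n-1}, set φ̂ = (3/2)φ^n - (1/2)φ^{n-1}, δ_t = φ^{n+1} - φ^n, δ_t' = φ^n - φ^{n-1}, δ_tt = φ^{n+1} - 2φ^n + φ^{n-1}. Then F(φ^{n+1}) - F(φ^n) - F'(φ̂)·δ_t ≤ (L/4)(δ_t² + δ_tt²) + (L/4)(δ_t')². -/
open Set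

private lemma lip (F : ℝ → ℝ) (L : ℝ) (hF' : Differentiable ℝ (deriv F))
    (hL : ∀ x, |deriv (deriv F) x| ≤ L) (a b : ℝ) :
    |deriv F b - deriv F a| ≤ L * |b - a| := by
  have := Convex.norm_image_sub_le_of_norm_deriv_le (f := deriv F) (s := univ)
    (fun x _ => hF' x) (fun x _ => hL x) convex_univ
    (mem_univ a) (mem_univ b)
  simpa using this

private lemma taylor_bound (F : ℝ → ℝ) (L : ℝ)
    (hF : Differentiable ℝ F) (hF' : Differentiable ℝ (deriv F))
    (hL : ∀ x, |deriv (deriv F) x| ≤ L) (x y : ℝ) :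
    |F y - F x - deriv F x * (y - x)| ≤ L / 2 * (y - x) ^ 2 := by
  have key : ∀ s : ℝ, s = 1 ∨ s = -1 →
      s * (F y - F x - deriv F x * (y - x)) ≤ L / 2 * (y - x) ^ 2 := by
    intro s hs
    set g : ℝ → ℝ := fun t => L / 2 * (t - x) ^ 2 - s * (F t - F x - deriv F x * (t - x)) with hg
    have hgd : Differentiable ℝ g := by
      apply Differentiable.sub
      · exact (differentiable_const _).mul ((differentiable_id.sub_const x).pow 2)
      · exact (differentiable_const s).mul ((hF.sub_const _).sub
          ((differentiable_const _).mul (differentiable_id.sub_const x)))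
    have hderiv : ∀ t, deriv g t = L * (t - x) - s * (deriv F t - deriv F x) := by
      intro t
      have h1 : HasDerivAt (fun t : ℝ => L / 2 * (t - x) ^ 2) (L / 2 * (2 * (t - x))) t := by
        have : HasDerivAt (fun t : ℝ => (t - x) ^ 2) (2 * (t - x) ^ 1 * 1) t :=
          ((hasDerivAt_id t).sub_const x).pow 2
        simpa using this.const_mul (L / 2)
      have h2 : HasDerivAt (fun t : ℝ => s * (F t - F x - deriv F x * (t - x)))
          (s * (deriv F t - deriv F x * 1)) t := by
        have : HasDerivAt (fun t : ℝ => F t - F x - deriv F x * (t - x))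
            (deriv F t - deriv F x * 1) t := by
          exact (((hF t).hasDerivAt.sub_const (F x)).sub
            (((hasDerivAt_id t).sub_const x).const_mul (deriv F x)))
        exact this.const_mul s
      have := (h1.sub h2).deriv
      exact this.trans (by ring)
    have hx0 : g x = 0 := by simp [hg]
    have hge : 0 ≤ g y := by
      rcases le_total x y with h | h
      · have mono : MonotoneOn g (Ici x) := by
          apply monotoneOn_of_deriv_nonneg (convex_Ici x) hgd.continuous.continuousOn
            hgd.differentiableOn
          intro t ht
          rw [hderiv]
          have ht' : x ≤ t := le_of_lt (by simpa using ht)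
          have := lip F L hF' hL x t
          rw [abs_of_nonneg (by linarith : (0:ℝ) ≤ t - x)] at this
          have habs := abs_le.1 this
          rcases hs with rfl | rfl <;> simp <;> nlinarith [habs.1, habs.2]
        have := mono (self_mem_Ici) (by exact h) h
        linarith [hx0 ▸ this]
      · have anti : AntitoneOn g (Iic x) := by
          apply antitoneOn_of_deriv_nonpos (convex_Iic x) hgd.continuous.continuousOn
            hgd.differentiableOn
          intro t ht
          rw [hderiv]
          have ht' : t ≤ x := le_of_lt (by simpa using ht)
          have := lip F L hF' hL x t
          rw [abs_of_nonpos (by linarith : t - x ≤ 0)] at this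
          have habs := abs_le.1 this
          rcases hs with rfl | rfl <;> simp <;> nlinarith [habs.1, habs.2]
        have := anti (by exact h : y ∈ Iic x) self_mem_Iic h
        linarith [hx0 ▸ this]
    have : s * (F y - F x - deriv F x * (y - x)) ≤ L / 2 * (y - x) ^ 2 := by
      have := hge
      simp only [hg] at this
      linarith
    exact this
  have h1 := key 1 (Or.inl rfl)
  have h2 := key (-1) (Or.inr rfl)
  rw [abs_le]; constructor <;> nlinarith

theorem stmt2 (F : ℝ → ℝ) (L : ℝ)
    (hF : Differentiable ℝ F) (hF' : Differentiable ℝ (deriv F))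
    (hL : ∀ x, |deriv (deriv F) x| ≤ L)
    (φ1 φ0 φm : ℝ) :
    F φ1 - F φ0 - deriv F ((3 / 2) * φ0 - (1 / 2) * φm) * (φ1 - φ0) ≤
      (L / 4) * ((φ1 - φ0) ^ 2 + (φ1 - 2 * φ0 + φm) ^ 2) + (L / 4) * (φ0 - φm) ^ 2 := by
  set c : ℝ := (3 / 2) * φ0 - (1 / 2) * φm with hc
  have hLnn : 0 ≤ L := le_trans (abs_nonneg _) (hL 0)
  have h1 := abs_le.1 (taylor_bound F L hF hF' hL c φ1)
  have h2 := abs_le.1 (taylor_bound F L hF hF' hL c φ0)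
  have e1 : φ1 - c = ((φ1 - φ0) + (φ1 - 2 * φ0 + φm)) / 2 := by rw [hc]; ring
  have e2 : φ0 - c = -(φ0 - φm) / 2 := by rw [hc]; ring
  rw [e1] at h1
  rw [e2] at h2
  nlinarith [h1.2, h2.1, mul_nonneg hLnn (sq_nonneg ((φ1 - φ0) - (φ1 - 2 * φ0 + φm)))]
end

section
/- Let F : ℝ → ℝ be twice differentiable with |F''(x)| ≤ L for all x. For real numbers φ^{n+1}, φ^n, φ^{n-1}, set φ̂ = 2φ^n - φ^{n-1}, δ_t = φ^{n+1} - φ^n, δ_t' = φ^n - φ^{n-1}, δ_tt = φ^{n+1} - 2φ^n + φ^{n-1}. Then F(φ^{n+1}) - F(φ^n) - F'(φ̂)·δ_t ≤ (L/2)·δ_tt² + (L/2)·(δ_t')². -/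
lemma key_taylor (F : ℝ → ℝ) (L : ℝ)
    (hF : Differentiable ℝ F) (hF' : Differentiable ℝ (deriv F))
    (hL : ∀ x, |deriv (deriv F) x| ≤ L) (a b : ℝ) :
    F b - F a - deriv F a * (b - a) ≤ L / 2 * (b - a) ^ 2 := by
  have hlip : ∀ x y : ℝ, |deriv F x - deriv F y| ≤ L * |x - y| := by
    intro x y
    have := Convex.norm_image_sub_le_of_norm_deriv_le (f := deriv F) (s := Set.univ)
      (fun z _ => (hF' z)) (fun z _ => by simpa using hL z) convex_univ
      (Set.mem_univ y) (Set.mem_univ x)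
    simpa [Real.norm_eq_abs] using this
  set g : ℝ → ℝ := fun t => F (a + t * (b - a)) - deriv F a * (t * (b - a))
      - L / 2 * t ^ 2 * (b - a) ^ 2 with hgdef
  have hg : ∀ t : ℝ, HasDerivAt g
      (deriv F (a + t * (b - a)) * (b - a) - deriv F a * (b - a) - L * t * (b - a) ^ 2) t := by
    intro t
    have h1 : HasDerivAt (fun t : ℝ => a + t * (b - a)) (b - a) t := by
      simpa using ((hasDerivAt_id t).mul_const (b - a)).const_add a
    have h2 := ((hF (a + t * (b - a))).hasDerivAt).comp t h1
    have h3 : HasDerivAt (fun t : ℝ => deriv F a * (t * (b - a))) (deriv F a * (b - a)) t := by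
      simpa using ((hasDerivAt_id t).mul_const (b - a)).const_mul (deriv F a)
    have h4 : HasDerivAt (fun t : ℝ => L / 2 * t ^ 2 * (b - a) ^ 2) (L * t * (b - a) ^ 2) t := by
      have := ((hasDerivAt_pow 2 t).const_mul (L / 2)).mul_const ((b - a) ^ 2)
      rw [show L * t * (b - a) ^ 2 = L / 2 * (((2:ℕ):ℝ) * t ^ (2 - 1)) * (b - a) ^ 2 by push_cast; ring]
      exact this
    exact (h2.sub h3).sub h4
  have hmono : AntitoneOn g (Set.Icc (0:ℝ) 1) := by
    apply antitoneOn_of_deriv_nonpos (convex_Icc 0 1)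
    · exact (Differentiable.continuous fun t => (hg t).differentiableAt).continuousOn
    · intro t _
      exact (hg t).differentiableAt.differentiableWithinAt
    · intro t ht
      rw [interior_Icc] at ht
      rw [(hg t).deriv]
      have h1 := hlip (a + t * (b - a)) a
      have h2 : |a + t * (b - a) - a| = t * |b - a| := by
        rw [show a + t * (b - a) - a = t * (b - a) by ring, abs_mul, abs_of_pos ht.1]
      rw [h2] at h1
      have h3 : |deriv F (a + t * (b - a)) - deriv F a| * |b - a| ≤ L * t * (b - a) ^ 2 := by
        calc |deriv F (a + t * (b - a)) - deriv F a| * |b - a|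
            ≤ L * (t * |b - a|) * |b - a| := mul_le_mul_of_nonneg_right h1 (abs_nonneg _)
          _ = L * t * (b - a) ^ 2 := by rw [← sq_abs (b - a)]; ring
      have h4 : (deriv F (a + t * (b - a)) - deriv F a) * (b - a)
          ≤ |deriv F (a + t * (b - a)) - deriv F a| * |b - a| :=
        (le_abs_self _).trans (abs_mul _ _).le
      nlinarith [h3, h4]
  have h01 := hmono (Set.left_mem_Icc.mpr zero_le_one) (Set.right_mem_Icc.mpr zero_le_one)
    zero_le_one
  have e0 : g 0 = F a := by simp [hgdef]
  have e1 : g 1 = F b - deriv F a * (b - a) - L / 2 * (b - a) ^ 2 := by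
    show F (a + 1 * (b - a)) - deriv F a * (1 * (b - a)) - L / 2 * 1 ^ 2 * (b - a) ^ 2 = _
    norm_num
  rw [e0, e1] at h01
  linarith

lemma key_taylor' (F : ℝ → ℝ) (L : ℝ)
    (hF : Differentiable ℝ F) (hF' : Differentiable ℝ (deriv F))
    (hL : ∀ x, |deriv (deriv F) x| ≤ L) (a b : ℝ) :
    -(L / 2 * (b - a) ^ 2) ≤ F b - F a - deriv F a * (b - a) := by
  have hd : deriv (fun x => -F x) = fun x => -deriv F x := funext fun x => deriv.neg
  have h := key_taylor (fun x => -F x) L hF.neg (by rw [hd]; exact hF'.neg)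
    (by
      intro x
      rw [hd]
      have : deriv (fun x => -deriv F x) x = -(deriv (deriv F) x) := deriv.neg
      rw [this, abs_neg]
      exact hL x) a b
  rw [hd] at h
  simp only at h
  linarith

theorem stmt3 (F : ℝ → ℝ) (L : ℝ)
    (hF : Differentiable ℝ F) (hF' : Differentiable ℝ (deriv F))
    (hL : ∀ x, |deriv (deriv F) x| ≤ L)
    (φ1 φ0 φm : ℝ) :
    F φ1 - F φ0 - deriv F (2 * φ0 - φm) * (φ1 - φ0) ≤
      (L / 2) * (φ1 - 2 * φ0 + φm) ^ 2 + (L / 2) * (φ0 - φm) ^ 2 := by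
  have h1 := key_taylor F L hF hF' hL (2 * φ0 - φm) φ1
  have h2 := key_taylor' F L hF hF' hL (2 * φ0 - φm) φ0
  nlinarith [h1, h2, sq_nonneg (φ1 - 2 * φ0 + φm), sq_nonneg (φ0 - φm)]
end
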